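/- Under the structural assumption, F ∈ 𝒜 if and only if 𝒜 has exactly one locally minimal element; moreover, in that case F is that unique locally minimal element and F ⊆ A for every A ∈ 𝒜 (Proposition 1(ii) of the paper, stated graph-theoretically). -/

import Mathlib

/-!  A graph-theoretic framework for d-separation in a finite directed acyclic
graph with vertex set `{y, t} ∪ S`, following the paper's conventions. -/

/-- Two vertices are adjacent if there is an edge between them in either direction. -/
def Adj {V : Type*} (E : V → V → Prop) (a b : V) : Prop := E a b ∨ E b a

/-- The full vertex sequence of a candidate path between `y` and `t` whose list of
intermediate vertices is `p`. -/
def pathSeq {V : Type*} (y t : V) (p : List V) : List V := y :: (p ++ [t])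

/-- `p` is the list of intermediate vertices of a path between `y` and `t`:
consecutive vertices of the full sequence `y :: p ++ [t]` are joined by an edge of
the graph (in either direction), and all vertices of the full sequence are
pairwise distinct. -/
def IsPath {V : Type*} (E : V → V → Prop) (y t : V) (p : List V) : Prop :=
  List.Chain' (Adj E) (pathSeq y t p) ∧ (pathSeq y t p).Nodup

/-- `v` is a collider of the path: it is an intermediate vertex and both edges of
the path adjacent to it point into it. -/
def IsCollider {V : Type*} (E : V → V → Prop) (y t : V) (p : List V) (v : V) : Prop :=
  v ∈ p ∧ ∃ a b, [a, v, b] <:+: pathSeq y t p ∧ E a v ∧ E b v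

/-- `v` is a non-collider of the path: an intermediate vertex that is not a collider. -/
def IsNonCollider {V : Type*} (E : V → V → Prop) (y t : V) (p : List V) (v : V) : Prop :=
  v ∈ p ∧ ¬ IsCollider E y t p v

/-- `d` is a descendant of `c`: there is a directed path of length ≥ 1 from `c` to `d`. -/
def Descendant {V : Type*} (E : V → V → Prop) (c d : V) : Prop := Relation.TransGen E c d

/-- The path with intermediate vertices `p` is blocked by the set `A`: some
non-collider of the path belongs to `A`, or some collider `c` of the path is such
that neither `c` nor any descendant of `c` belongs to `A`. -/
def Blocked {V : Type*} (E : V → V → Prop) (y t : V) (A : Set V) (p : List V) : Prop :=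
  (∃ v, IsNonCollider E y t p v ∧ v ∈ A) ∨
    (∃ c, IsCollider E y t p c ∧ c ∉ A ∧ ∀ d, Descendant E c d → d ∉ A)

/-- `A` d-separates `y` and `t`: `A ⊆ S` and every path between `y` and `t` is
blocked by `A`.  (`A ∈ 𝒜` in the paper's notation.) -/
def DSep {V : Type*} (E : V → V → Prop) (y t : V) (S A : Set V) : Prop :=
  A ⊆ S ∧ ∀ p, IsPath E y t p → Blocked E y t A p

/-- The directed graph is acyclic. -/
def Acyclic {V : Type*} (E : V → V → Prop) : Prop := ∀ v, ¬ Relation.TransGen E v v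

/-- Structural assumption: every edge incident to `y` has head `y` and tail in `S`,
and every edge incident to `t` has head `t` and tail in `S`. -/
def Structural {V : Type*} (E : V → V → Prop) (y t : V) (S : Set V) : Prop :=
  (∀ a, ¬ E y a) ∧ (∀ a, ¬ E t a) ∧ (∀ a, E a y → a ∈ S) ∧ (∀ a, E a t → a ∈ S)

/-- `A` is a locally minimal element of `𝒜`: it d-separates `y` and `t` and no
proper subset of it does. -/
def LocallyMinimal {V : Type*} (E : V → V → Prop) (y t : V) (S A : Set V) : Prop :=
  DSep E y t S A ∧ ∀ B, B ⊂ A → ¬ DSep E y t S B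

/-- `A ∈ 𝒩`: `A` d-separates `y` and `t` and so does every `B` with `A ⊆ B ⊆ S`. -/
def InN {V : Type*} (E : V → V → Prop) (y t : V) (S A : Set V) : Prop :=
  DSep E y t S A ∧ ∀ B, A ⊆ B → B ⊆ S → DSep E y t S B

section helpers


variable {V : Type*}

/-- Uniqueness of splitting a list at an element not occurring elsewhere. -/
lemma aux_split {v : V} : ∀ (s l₁ : List V) {u l₂ : List V},
    s ++ v :: u = l₁ ++ v :: l₂ → v ∉ s → v ∉ l₁ → s = l₁ ∧ u = l₂ := by
  intro s
  induction s with
  | nil =>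
    intro l₁ u l₂ h h1 h2
    cases l₁ with
    | nil => simpa using h
    | cons c l₁' =>
      exfalso
      have : v = c := by simpa using congrArg List.head? h
      exact h2 (by simp [this])
  | cons c s' ih =>
    intro l₁ u l₂ h h1 h2
    cases l₁ with
    | nil =>
      exfalso
      have : c = v := by simpa using congrArg List.head? h
      exact h1 (by simp [this])
    | cons d l₁' =>
      have hcd : c = d := by simpa using congrArg List.head? h
      have htail : s' ++ v :: u = l₁' ++ v :: l₂ := by
        simpa using congrArg List.tail h
      obtain ⟨h3, h4⟩ := ih l₁' htail (fun hv => h1 (List.mem_cons_of_mem _ hv))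
        (fun hv => h2 (List.mem_cons_of_mem _ hv))
      exact ⟨by rw [hcd, h3], h4⟩

/-- In a nodup list split as `l₁ ++ v :: l₂`, an infix `[a, v, b]` determines
`a` as the last of `l₁` and `b` as the head of `l₂`. -/
lemma key_infix {l₁ l₂ : List V} {a v b : V} (hn : (l₁ ++ v :: l₂).Nodup)
    (h : [a, v, b] <:+: l₁ ++ v :: l₂) :
    l₁.getLast? = some a ∧ l₂.head? = some b := by
  obtain ⟨s, u, hsu⟩ := h
  have hsu' : (s ++ [a]) ++ v :: (b :: u) = l₁ ++ v :: l₂ := by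
    simpa [List.append_assoc] using hsu
  have hv₁ : v ∉ l₁ := by
    rw [List.nodup_append] at hn
    exact fun hmem => hn.2.2 v hmem v List.mem_cons_self rfl
  have hn' : ((s ++ [a]) ++ v :: (b :: u)).Nodup := by rw [hsu']; exact hn
  have hv₂ : v ∉ s ++ [a] := by
    rw [List.nodup_append] at hn'
    exact fun hmem => hn'.2.2 v hmem v List.mem_cons_self rfl
  obtain ⟨h1, h2⟩ := aux_split (s ++ [a]) l₁ hsu' hv₂ hv₁
  constructor
  · rw [← h1]; exact List.getLast?_concat
  · rw [← h2]; rfl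

variable {E : V → V → Prop} {y t : V} {S : Set V}


lemma first_edge (hy : ∀ a, ¬ E y a) {v : V} {rest : List V}
    (hp : IsPath E y t (v :: rest)) : E v y := by
  have hc : Adj E y v := (List.isChain_cons_cons.mp hp.1).1
  rcases hc with h | h
  · exact absurd h (hy v)
  · exact h

lemma last_edge (ht : ∀ a, ¬ E t a) {w : V} {q : List V}
    (hp : IsPath E y t (q ++ [w])) : E w t := by
  have hsuf : [w, t] <:+ pathSeq y t (q ++ [w]) := by
    refine ⟨y :: q, ?_⟩
    simp [pathSeq]
  have hc : List.Chain' (Adj E) [w, t] := hp.1.suffix hsuf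
  rcases (List.isChain_cons_cons.mp hc).1 with h | h
  · exact h
  · exact absurd h (ht w)

lemma not_collider_first (hy : ∀ a, ¬ E y a) {v : V} {rest : List V}
    (hp : IsPath E y t (v :: rest)) : ¬ IsCollider E y t (v :: rest) v := by
  rintro ⟨-, a, b, hinf, hav, hbv⟩
  have hform : pathSeq y t (v :: rest) = [y] ++ v :: (rest ++ [t]) := by simp [pathSeq]
  rw [hform] at hinf
  have hn := hp.2
  rw [hform] at hn
  obtain ⟨h1, -⟩ := key_infix hn hinf
  have : y = a := by simpa using h1
  exact hy v (this ▸ hav)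

lemma not_collider_last (ht : ∀ a, ¬ E t a) {w : V} {q : List V}
    (hp : IsPath E y t (q ++ [w])) : ¬ IsCollider E y t (q ++ [w]) w := by
  rintro ⟨-, a, b, hinf, hav, hbv⟩
  have hform : pathSeq y t (q ++ [w]) = (y :: q) ++ w :: [t] := by simp [pathSeq]
  rw [hform] at hinf
  have hn := hp.2
  rw [hform] at hn
  obtain ⟨-, h2⟩ := key_infix hn hinf
  have : t = b := by simpa using h2
  exact ht w (this ▸ hbv)

/-- Every d-separating set contains the common parents. -/
lemma F_subset (hstruct : Structural E y t S) (hyt : y ≠ t) (hyS : y ∉ S) (htS : t ∉ S) :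
    ∀ A, DSep E y t S A → {j | j ∈ S ∧ E j y ∧ E j t} ⊆ A := by
  obtain ⟨hy, ht, hSy, hSt⟩ := hstruct
  intro A hA i hi
  obtain ⟨hiS, hiy, hit⟩ := hi
  have hiy' : i ≠ y := fun h => hyS (h ▸ hiS)
  have hit' : i ≠ t := fun h => htS (h ▸ hiS)
  have hpath : IsPath E y t [i] := by
    constructor
    · show List.Chain' (Adj E) [y, i, t]
      exact List.isChain_cons_cons.mpr ⟨Or.inr hiy, List.isChain_cons_cons.mpr ⟨Or.inl hit, List.isChain_singleton t⟩⟩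
    · show List.Nodup [y, i, t]
      simp [hyt, hiy'.symm, hit']
  rcases hA.2 [i] hpath with ⟨v, ⟨hv, -⟩, hvA⟩ | ⟨c, hcol, -, -⟩
  · have : v = i := by simpa using hv
    exact this ▸ hvA
  · exfalso
    obtain ⟨hc, a, b, hinf, hac, hbc⟩ := hcol
    have hci : c = i := by simpa using hc
    subst hci
    have hform : pathSeq y t [c] = [y] ++ c :: [t] := by simp [pathSeq]
    rw [hform] at hinf
    have hn := hpath.2
    rw [hform] at hn
    obtain ⟨h1, -⟩ := key_infix hn hinf
    have : y = a := by simpa using h1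
    exact hy c (this ▸ hac)

/-- Removing a non-common-parent from `S` still d-separates. -/
lemma diff_dsep (hstruct : Structural E y t S) {x : V} (hxS : x ∈ S)
    (hx : ¬ (E x y ∧ E x t)) : DSep E y t S (S \ {x}) := by
  obtain ⟨hy, ht, hSy, hSt⟩ := hstruct
  refine ⟨Set.diff_subset, fun p hp => ?_⟩
  have hpne : p ≠ [] := by
    rintro rfl
    rcases (List.isChain_cons_cons.mp hp.1).1 with h | h
    · exact hy t h
    · exact ht y h
  obtain ⟨v, rest, rfl⟩ := List.exists_cons_of_ne_nil hpne
  have h1 : E v y := first_edge hy hp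
  have hvS : v ∈ S := hSy v h1
  by_cases hvx : v = x
  · subst hvx
    have hxt : ¬ E v t := fun h => hx ⟨h1, h⟩
    rcases List.eq_nil_or_concat (v :: rest) with hnil | ⟨q, w, hqw⟩
    · exact absurd hnil (List.cons_ne_nil v rest)
    · rw [List.concat_eq_append] at hqw
      rw [hqw] at hp ⊢
      have h2 : E w t := last_edge ht hp
      have hwS : w ∈ S := hSt w h2
      have hwx : w ≠ v := fun h => hxt (h ▸ h2)
      left
      exact ⟨w, ⟨by simp, not_collider_last ht hp⟩, hwS, hwx⟩
  · left
    exact ⟨v, ⟨List.mem_cons_self, not_collider_first hy hp⟩, hvS, hvx⟩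

/-- Existence of a locally minimal d-separating subset of any d-separating set. -/
lemma exists_locmin_subset [Fintype V] {C : Set V} (hC : DSep E y t S C) :
    ∃ B, LocallyMinimal E y t S B ∧ B ⊆ C := by
  classical
  have hfin : {B : Set V | DSep E y t S B ∧ B ⊆ C}.Finite := Set.toFinite _
  obtain ⟨B, hB, hmin⟩ := hfin.exists_minimalFor id _ ⟨C, hC, subset_rfl⟩
  refine ⟨B, ⟨hB.1, fun D hD hDsep => ?_⟩, hB.2⟩
  have hDmem : D ∈ {B : Set V | DSep E y t S B ∧ B ⊆ C} :=
    ⟨hDsep, hD.subset.trans hB.2⟩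
  have := le_antisymm (hmin hDmem hD.subset) hD.subset
  exact hD.ne (this.symm)

end helpers

/-- Proposition 1(ii): under the structural assumption, with `F`
the set of common parents of `y` and `t`, `F ∈ 𝒜` if and only if `𝒜` has exactly
one locally minimal element; moreover, in that case `F` is that unique locally
minimal element and `F ⊆ A` for every `A ∈ 𝒜`. -/
theorem stmt4 {V : Type*} [Fintype V] (E : V → V → Prop) (y t : V) (S : Set V)
    (hyt : y ≠ t) (hyS : y ∉ S) (htS : t ∉ S)
    (hcover : ∀ v, v = y ∨ v = t ∨ v ∈ S)
    (hacyc : Acyclic E)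
    (hstruct : Structural E y t S) :
    (DSep E y t S {j | j ∈ S ∧ E j y ∧ E j t} ↔
      (∃! A, LocallyMinimal E y t S A)) ∧
    (DSep E y t S {j | j ∈ S ∧ E j y ∧ E j t} →
      LocallyMinimal E y t S {j | j ∈ S ∧ E j y ∧ E j t} ∧
      ∀ A, DSep E y t S A → {j | j ∈ S ∧ E j y ∧ E j t} ⊆ A) := by
  set F : Set V := {j | j ∈ S ∧ E j y ∧ E j t} with hF
  have hFsub : ∀ A, DSep E y t S A → F ⊆ A := F_subset hstruct hyt hyS htS
  have hFlm : DSep E y t S F → LocallyMinimal E y t S F := fun hFd =>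
    ⟨hFd, fun B hB hDB => hB.not_subset (hFsub B hDB)⟩
  have huniq : DSep E y t S F → ∀ A, LocallyMinimal E y t S A → A = F := by
    intro hFd A hA
    have hFA : F ⊆ A := hFsub A hA.1
    by_contra hne
    exact hA.2 F ⟨hFA, fun h => hne (le_antisymm h hFA)⟩ hFd
  constructor
  · constructor
    · intro hFd
      exact ⟨F, hFlm hFd, fun A hA => huniq hFd A hA⟩
    · rintro ⟨A, hA, hAu⟩
      -- show A ⊆ F, hence A = F, hence DSep F
      have hAF : A ⊆ F := by
        intro x hxA
        by_contra hxF
        have hxS : x ∈ S := hA.1.1 hxA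
        have hx : ¬ (E x y ∧ E x t) := fun h => hxF ⟨hxS, h.1, h.2⟩
        have hdiff : DSep E y t S (S \ {x}) := diff_dsep hstruct hxS hx
        obtain ⟨B, hBlm, hBsub⟩ := exists_locmin_subset hdiff
        have hBA : B = A := hAu B hBlm
        have : x ∈ S \ {x} := hBsub (hBA ▸ hxA)
        exact this.2 rfl
      have : A = F := le_antisymm hAF (hFsub A hA.1)
      exact this ▸ hA.1
  · intro hFd
    exact ⟨hFlm hFd, hFsub⟩
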